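/- Isbell's desirability relation ⪰ on the voters of any simple game is transitive. -/

import Mathlib

open Finset

def IsSimpleGame {n : ℕ} (v : Finset (Fin n) → ℕ) : Prop :=
  (∀ S, v S = 0 ∨ v S = 1) ∧ (∀ S T : Finset (Fin n), S ⊆ T → v S ≤ v T) ∧
    (∃ S, v S = 0) ∧ (∃ S, v S = 1)

def IsWeighted {n : ℕ} (v : Finset (Fin n) → ℕ) : Prop :=
  ∃ (w : Fin n → ℝ) (q : ℝ), (∀ i, 0 ≤ w i) ∧ 0 < q ∧
    ∀ S : Finset (Fin n), v S = 1 ↔ q ≤ ∑ i ∈ S, w i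

noncomputable def wg {n : ℕ} (q : ℝ) (w : Fin n → ℝ) (S : Finset (Fin n)) : ℕ :=
  if q ≤ ∑ i ∈ S, w i then 1 else 0

def Dominates {n : ℕ} (v : Finset (Fin n) → ℕ) (i j : Fin n) : Prop :=
  ∀ S : Finset (Fin n), i ∉ S → j ∉ S → v (insert j S) ≤ v (insert i S)

noncomputable def SSI {n : ℕ} (v : Finset (Fin n) → ℕ) (i : Fin n) : ℝ :=
  ∑ S ∈ (univ.erase i).powerset,
    ((S.card.factorial * (n - S.card - 1).factorial : ℕ) : ℝ) / (n.factorial : ℝ) *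
      ((v (insert i S) : ℝ) - (v S : ℝ))

def eta {n : ℕ} (v : Finset (Fin n) → ℕ) (i : Fin n) : ℤ :=
  ∑ S ∈ (univ.erase i).powerset, ((v (insert i S) : ℤ) - (v S : ℤ))

noncomputable def PBI {n : ℕ} (v : Finset (Fin n) → ℕ) (i : Fin n) : ℝ :=
  ((eta v i : ℤ) : ℝ) / ∑ j, ((eta v j : ℤ) : ℝ)

theorem stmt6 (n : ℕ) (v : Finset (Fin n) → ℕ) (hv : IsSimpleGame v)
    (i j k : Fin n) (hij : Dominates v i j) (hjk : Dominates v j k) :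
    Dominates v i k := by
  intro S hiS hkS
  by_cases hik : i = k
  · subst hik; exact le_refl _
  by_cases hjS : j ∈ S
  · -- j ∈ S: work with S' = S.erase j
    set S' := S.erase j with hS'
    have hiS' : i ∉ S' := fun h => hiS (mem_of_mem_erase h)
    have hkS' : k ∉ S' := fun h => hkS (mem_of_mem_erase h)
    have hjS' : j ∉ S' := notMem_erase j S
    have hji : j ≠ i := fun h => hiS (h ▸ hjS)
    have hjk' : j ≠ k := fun h => hkS (h ▸ hjS)
    have hSeq : insert j S' = S := insert_erase hjS
    have h1 : v (insert k S) = v (insert j (insert k S')) := by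
      rw [← hSeq, Finset.insert_comm]
    have h2 : v (insert i S) = v (insert j (insert i S')) := by
      rw [← hSeq, Finset.insert_comm]
    rw [h1, h2]
    have step1 : v (insert j (insert k S')) ≤ v (insert i (insert k S')) := by
      apply hij
      · simp [hik, hiS']
      · simp [hjk', hjS']
    have step2 : v (insert k (insert i S')) ≤ v (insert j (insert i S')) := by
      apply hjk
      · simp [hji, hjS']
      · simp [Ne.symm hik, hkS']
    calc v (insert j (insert k S')) ≤ v (insert i (insert k S')) := step1
      _ = v (insert k (insert i S')) := by rw [Finset.insert_comm]
      _ ≤ v (insert j (insert i S')) := step2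
  · exact le_trans (hjk S hjS hkS) (hij S hiS hjS)
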